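/- Let N ≥ 8 be an integer divisible by 4. For every integer s with 1 ≤ s ≤ N/4 − 1, one has N²/2 + ∑_{j=1}^{N/4−1} (N − 4j)² cos(4πjs/N) = 2N/sin²(2πs/N). -/
import Mathlib

noncomputable def Phi (a t x : ℝ) : ℝ :=
  (2 * Real.sin t ^ 2 * (x ^ 2 - (2 * a + 1) * x + a ^ 2 + a) + 1 - Real.cos t ^ 2) *
      Real.sin ((2 * x - 1) * t) +
    (Real.sin t * Real.cos t * (2 * x - 2 * a - 1)) * Real.cos ((2 * x - 1) * t)

lemma T1 (t : ℝ) (n : ℕ) :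
    2 * Real.sin t * ∑ j ∈ Finset.range n, Real.cos (2 * j * t)
      = Real.sin (2 * n * t - t) + Real.sin t := by
  induction n with
  | zero => simp
  | succ n ih =>
      rw [Finset.sum_range_succ, mul_add, ih]
      push_cast
      rw [show 2 * ((n : ℝ) + 1) * t - t = 2 * n * t + t from by ring, Real.sin_add,
        Real.sin_sub]
      ring

lemma T2 (a t : ℝ) (n : ℕ) :
    ∑ j ∈ Finset.range n,
        (4 * Real.sin t ^ 3 * (a - j) ^ 2 + 2 * Real.sin t) * Real.cos (2 * j * t)
      = Phi a t n - Phi a t 0 := by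
  induction n with
  | zero => simp
  | succ n ih =>
      rw [Finset.sum_range_succ, ih]
      unfold Phi
      push_cast
      rw [show (2 * ((n : ℝ) + 1) - 1) * t = 2 * n * t + t from by ring,
        show (2 * (n : ℝ) - 1) * t = 2 * n * t - t from by ring,
        Real.sin_add, Real.cos_add, Real.sin_sub, Real.cos_sub]
      ring

theorem sum_identity_even_inverse (N : ℕ) (hN4 : 4 ∣ N) (hN8 : 8 ≤ N)
    (s : ℕ) (hs1 : 1 ≤ s) (hs2 : s ≤ N / 4 - 1) :
    (N : ℝ) ^ 2 / 2 + ∑ j ∈ Finset.Icc 1 (N / 4 - 1),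
        ((N : ℝ) - 4 * j) ^ 2 * Real.cos (4 * Real.pi * j * s / N)
      = 2 * (N : ℝ) / Real.sin (2 * Real.pi * s / N) ^ 2 := by
  obtain ⟨M, rfl⟩ := hN4
  have hM2 : 2 ≤ M := by omega
  have hsM : s < M := by omega
  have hidx : 4 * M / 4 - 1 = M - 1 := by omega
  rw [hidx]
  have hM0 : (M : ℝ) ≠ 0 := by positivity
  have hMpos : (0 : ℝ) < M := by positivity
  set t : ℝ := Real.pi * s / (2 * M) with htdef
  have hs0 : (0 : ℝ) < s := by exact_mod_cast hs1
  have hsMr : (s : ℝ) < M := by exact_mod_cast hsM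
  have ht0 : 0 < t := by rw [htdef]; positivity
  have htpi : t < Real.pi := by
    rw [htdef, div_lt_iff₀ (by positivity)]
    nlinarith [Real.pi_pos]
  have hS0 : Real.sin t ≠ 0 := ne_of_gt (Real.sin_pos_of_pos_of_lt_pi ht0 htpi)
  have h2Mt : 2 * (M : ℝ) * t = Real.pi * s := by
    rw [htdef]; field_simp; try ring
  have hsins' : Real.sin (Real.pi * s) = 0 := by
    rw [mul_comm]; exact Real.sin_nat_mul_pi s
  push_cast
  have hteq : 2 * Real.pi * (s : ℝ) / (4 * (M : ℝ)) = t := by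
    rw [htdef]; field_simp; try ring
  rw [hteq]
  have hsum : ∑ j ∈ Finset.Icc 1 (M - 1),
      (4 * (M : ℝ) - 4 * j) ^ 2 * Real.cos (4 * Real.pi * j * s / (4 * M))
      = 16 * ∑ j ∈ Finset.Icc 1 (M - 1), ((M : ℝ) - j) ^ 2 * Real.cos (2 * j * t) := by
    rw [Finset.mul_sum]
    refine Finset.sum_congr rfl fun j _ => ?_
    rw [show 4 * Real.pi * (j : ℝ) * s / (4 * M) = 2 * j * t from by
      rw [htdef]; field_simp; try ring]
    ring
  rw [hsum, eq_div_iff (pow_ne_zero 2 hS0)]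
  have h2 := T2 (M : ℝ) t M
  have hΦM : Phi (M : ℝ) t (M : ℝ) = -Real.cos (Real.pi * s) * Real.sin t := by
    unfold Phi
    rw [show (2 * (M : ℝ) - 1) * t = Real.pi * s - t from by linear_combination h2Mt,
      Real.sin_sub, Real.cos_sub, hsins']
    ring
  have hΦ0 : Phi (M : ℝ) t 0
      = -(2 * Real.sin t ^ 2 * ((M : ℝ) ^ 2 + M) + 1 - Real.cos t ^ 2) * Real.sin t
        - Real.sin t * Real.cos t ^ 2 * (2 * M + 1) := by
    unfold Phi
    rw [show (2 * (0 : ℝ) - 1) * t = -t from by ring, Real.sin_neg, Real.cos_neg]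
    ring
  rw [hΦM, hΦ0] at h2
  have h1 := T1 t M
  rw [show 2 * (M : ℝ) * t - t = Real.pi * s - t from by linear_combination h2Mt,
    Real.sin_sub] at h1
  have hexp : (∑ j ∈ Finset.range M,
      (4 * Real.sin t ^ 3 * ((M : ℝ) - j) ^ 2 + 2 * Real.sin t) * Real.cos (2 * j * t))
      = 4 * Real.sin t ^ 3 * ∑ j ∈ Finset.range M, ((M : ℝ) - j) ^ 2 * Real.cos (2 * j * t)
        + 2 * Real.sin t * ∑ j ∈ Finset.range M, Real.cos (2 * j * t) := by
    rw [Finset.mul_sum, Finset.mul_sum, ← Finset.sum_add_distrib]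
    exact Finset.sum_congr rfl fun j _ => by ring
  have hsplit : ∑ j ∈ Finset.range M, ((M : ℝ) - j) ^ 2 * Real.cos (2 * j * t)
      = (M : ℝ) ^ 2 + ∑ j ∈ Finset.Icc 1 (M - 1), ((M : ℝ) - j) ^ 2 * Real.cos (2 * j * t) := by
    have hR : Finset.range M = insert 0 (Finset.Icc 1 (M - 1)) := by
      ext x
      simp only [Finset.mem_range, Finset.mem_insert, Finset.mem_Icc]
      omega
    rw [hR, Finset.sum_insert (by simp)]
    norm_num
  have hP : Real.sin t ^ 2 + Real.cos t ^ 2 = 1 := Real.sin_sq_add_cos_sq t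
  refine mul_left_cancel₀ hS0 ?_
  linear_combination 4 * h2 - 4 * hexp - 16 * Real.sin t ^ 3 * hsplit - 4 * h1
    - 4 * Real.cos t * hsins' + 8 * Real.sin t * (M : ℝ) * hP
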